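/- arXiv:1110.1697 — 3 statements merged into one kernel-verified Lean document; each statement's English description precedes it below -/
import Mathlib

section
/- Let H, G₁,…,G_m be real Hilbert spaces, ωᵢ ∈ (0,1] with ∑ωᵢ = 1, τ, σ₁,…,σ_m > 0 with τ ∑ᵢ σᵢωᵢ‖Lᵢ‖² < 1, and Lᵢ : H → Gᵢ bounded linear. On K = H ⊕ G₁ ⊕ ⋯ ⊕ G_m with inner product ⟨(x,v),(y,w)⟩ = ⟨x,y⟩ + ∑ᵢωᵢ⟨vᵢ,wᵢ⟩, define V(x,v₁,…,v_m) = (τ⁻¹x − ∑ᵢ ωᵢLᵢ*vᵢ, σ₁⁻¹v₁ − L₁x, …, σ_m⁻¹v_m − L_m x). Then V is self-adjoint and ρ-strongly positive, i.e., ⟨u, Vu⟩_K ≥ ρ‖u‖²_K for all u ∈ K, where ρ = min{τ⁻¹, σ₁⁻¹, …, σ_m⁻¹}·(1 − (τ ∑ᵢ σᵢωᵢ‖Lᵢ‖²)^{1/2}). -/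
open scoped RealInnerProductSpace

/-- The operator V(x,v) = (τ⁻¹x − ∑ᵢωᵢLᵢ*vᵢ, (σᵢ⁻¹vᵢ − Lᵢx)ᵢ) on the weighted product
space K is self-adjoint and ρ-strongly positive, with
ρ = min{τ⁻¹,σ₁⁻¹,…,σ_m⁻¹}(1 − √(τ∑ᵢσᵢωᵢ‖Lᵢ‖²)).  The weighted inner product on K is
unfolded as ⟨(x,v),(y,w)⟩_K = ⟨x,y⟩ + ∑ᵢωᵢ⟨vᵢ,wᵢ⟩. -/
theorem V_selfAdjoint_stronglyPositive {H : Type*} [NormedAddCommGroup H]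
    [InnerProductSpace ℝ H] [CompleteSpace H] {m : ℕ} (hm : 0 < m) (G : Fin m → Type*)
    [∀ i, NormedAddCommGroup (G i)] [∀ i, InnerProductSpace ℝ (G i)]
    [∀ i, CompleteSpace (G i)]
    (ω σ : Fin m → ℝ) (τ : ℝ) (hω : ∀ i, 0 < ω i ∧ ω i ≤ 1) (hωsum : ∑ i, ω i = 1)
    (hσ : ∀ i, 0 < σ i) (hτ : 0 < τ)
    (L : ∀ i, H →L[ℝ] G i)
    (hsmall : τ * ∑ i, σ i * ω i * ‖L i‖ ^ 2 < 1)
    (ρ : ℝ)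
    (hρ : ρ = min τ⁻¹ (⨅ i, (σ i)⁻¹) *
      (1 - Real.sqrt (τ * ∑ i, σ i * ω i * ‖L i‖ ^ 2)))
    -- V₁ and V₂ are the two components of V
    (V₁ : H → (∀ i, G i) → H) (V₂ : H → (∀ i, G i) → ∀ i, G i)
    (hV₁ : ∀ x v, V₁ x v = τ⁻¹ • x - ∑ i, ω i • (ContinuousLinearMap.adjoint (L i)) (v i))
    (hV₂ : ∀ x v i, V₂ x v i = (σ i)⁻¹ • v i - L i x) :
    (∀ (x y : H) (v w : ∀ i, G i),
        ⟪x, V₁ y w⟫ + ∑ i, ω i * ⟪v i, V₂ y w i⟫ =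
          ⟪V₁ x v, y⟫ + ∑ i, ω i * ⟪V₂ x v i, w i⟫) ∧
      ∀ (x : H) (v : ∀ i, G i),
        ρ * (‖x‖ ^ 2 + ∑ i, ω i * ‖v i‖ ^ 2) ≤
          ⟪x, V₁ x v⟫ + ∑ i, ω i * ⟪v i, V₂ x v i⟫ := by
  constructor
  · intro x y v w
    simp only [hV₁, hV₂, inner_sub_right, inner_sub_left, inner_smul_right, inner_smul_left,
      inner_sum, sum_inner, ContinuousLinearMap.adjoint_inner_right,
      ContinuousLinearMap.adjoint_inner_left, conj_trivial, mul_sub, Finset.sum_sub_distrib]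
    ring
  · intro x v
    set S : ℝ := τ * ∑ i, σ i * ω i * ‖L i‖ ^ 2 with hS
    set β : ℝ := Real.sqrt S with hβ
    set μ : ℝ := min τ⁻¹ (⨅ i, (σ i)⁻¹) with hμ
    set A : ℝ := ‖x‖ ^ 2 + ∑ i, ω i * ‖v i‖ ^ 2 with hA
    set B : ℝ := τ⁻¹ * ‖x‖ ^ 2 + ∑ i, ω i * (σ i)⁻¹ * ‖v i‖ ^ 2 with hB
    clear_value S β μ A B
    have hsum0 : 0 ≤ ∑ i, σ i * ω i * ‖L i‖ ^ 2 :=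
      Finset.sum_nonneg fun i _ => by have := hσ i; have := (hω i).1; positivity
    have hS0 : 0 ≤ S := by rw [hS]; exact mul_nonneg hτ.le hsum0
    have hβ0 : 0 ≤ β := by rw [hβ]; exact Real.sqrt_nonneg _
    have hβsq : β ^ 2 = S := by rw [hβ]; exact Real.sq_sqrt hS0
    have hβ1 : β < 1 := by
      rw [hβ, show (1:ℝ) = Real.sqrt 1 by simp]
      exact Real.sqrt_lt_sqrt hS0 (by simpa using hsmall)
    have hμτ : μ ≤ τ⁻¹ := by rw [hμ]; exact min_le_left _ _
    have hμσ : ∀ i, μ ≤ (σ i)⁻¹ := fun i => by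
      rw [hμ]
      exact le_trans (min_le_right _ _) (ciInf_le (Set.finite_range _).bddBelow i)
    have hμ0 : 0 ≤ μ := by
      rw [hμ]
      exact le_min (inv_nonneg.mpr hτ.le)
        (Real.iInf_nonneg fun i => inv_nonneg.mpr (hσ i).le)
    have hB0 : 0 ≤ B := by
      rw [hB]
      have h1 : 0 ≤ ∑ i, ω i * (σ i)⁻¹ * ‖v i‖ ^ 2 :=
        Finset.sum_nonneg fun i _ => by have := hσ i; have := (hω i).1; positivity
      have h2 : (0:ℝ) ≤ τ⁻¹ * ‖x‖ ^ 2 := by positivity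
      linarith
    -- rewrite the quadratic form
    have hq : ⟪x, V₁ x v⟫ + ∑ i, ω i * ⟪v i, V₂ x v i⟫ =
        B - 2 * ∑ i, ω i * ⟪L i x, v i⟫ := by
      rw [hB]
      simp only [hV₁, hV₂, inner_sub_right, inner_sub_left, inner_smul_right, inner_smul_left,
        inner_sum, sum_inner, ContinuousLinearMap.adjoint_inner_right,
        ContinuousLinearMap.adjoint_inner_left, conj_trivial, mul_sub, Finset.sum_sub_distrib,
        real_inner_self_eq_norm_sq]
      have hc : ∀ i, ⟪v i, L i x⟫ = ⟪L i x, v i⟫ := fun i => real_inner_comm _ _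
      simp only [hc]
      ring
    rw [hq, hρ]
    -- key cross-term bound
    have hcross : 2 * ∑ i, ω i * ⟪L i x, v i⟫ ≤ β * B := by
      rcases eq_or_lt_of_le hβ0 with hb | hb
      · -- β = 0 : all L i = 0
        have hSz : S = 0 := by
          by_contra h
          have h1 : 0 < S := lt_of_le_of_ne hS0 (Ne.symm h)
          have h2 : 0 < β := by rw [hβ]; exact Real.sqrt_pos.mpr h1
          linarith
        have hz : ∑ i, σ i * ω i * ‖L i‖ ^ 2 = 0 := by
          rcases mul_eq_zero.mp (hS ▸ hSz : τ * ∑ i, σ i * ω i * ‖L i‖ ^ 2 = 0) with h | h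
          · exact absurd h hτ.ne'
          · exact h
        have hiz : ∀ i, ⟪L i x, v i⟫ = (0:ℝ) := by
          intro i
          have hti := (Finset.sum_eq_zero_iff_of_nonneg (fun i _ => by
            have := hσ i; have := (hω i).1; positivity)).mp hz i (Finset.mem_univ i)
          have hL2 : ‖L i‖ ^ 2 = 0 := by
            rcases mul_eq_zero.mp hti with h | h
            · exact absurd h (by have := hσ i; have := (hω i).1; positivity : (0:ℝ) < σ i * ω i).ne'
            · exact h
          have hLn : ‖L i‖ = 0 := by nlinarith [norm_nonneg (L i)]
          have : L i = 0 := by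
            ext y
            exact norm_le_zero_iff.mp (le_trans ((L i).le_opNorm y) (by rw [hLn]; simp))
          simp [this]
        simp only [hiz, mul_zero, Finset.sum_const_zero]
        exact mul_nonneg hβ0 hB0
      · -- β > 0
        have hterm : ∀ i ∈ Finset.univ, ω i * (2 * ⟪L i x, v i⟫) ≤
            ω i * (σ i * ‖L i‖ ^ 2 * β⁻¹ * ‖x‖ ^ 2 + β * (σ i)⁻¹ * ‖v i‖ ^ 2) := by
          intro i _
          apply mul_le_mul_of_nonneg_left _ (hω i).1.le
          have h1 : ⟪L i x, v i⟫ ≤ ‖L i‖ * ‖x‖ * ‖v i‖ :=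
            le_trans (real_inner_le_norm _ _)
              (mul_le_mul_of_nonneg_right ((L i).le_opNorm x) (norm_nonneg _))
          have hσi := hσ i
          have key : 2 * (‖L i‖ * ‖x‖ * ‖v i‖) ≤
              σ i * ‖L i‖ ^ 2 * β⁻¹ * ‖x‖ ^ 2 + β * (σ i)⁻¹ * ‖v i‖ ^ 2 := by
            rw [← sub_nonneg]
            have expand : σ i * ‖L i‖ ^ 2 * β⁻¹ * ‖x‖ ^ 2 + β * (σ i)⁻¹ * ‖v i‖ ^ 2
                - 2 * (‖L i‖ * ‖x‖ * ‖v i‖) =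
                (σ i * ‖L i‖ * ‖x‖ - β * ‖v i‖) ^ 2 / (β * σ i)
                + (β * σ i - β * σ i) * ‖L i‖ * ‖x‖ * ‖v i‖ / (β * σ i) := by
              field_simp
              ring
            rw [expand]
            have h3 : (0:ℝ) < β * σ i := mul_pos hb hσi
            have h4 : (0:ℝ) ≤ (σ i * ‖L i‖ * ‖x‖ - β * ‖v i‖) ^ 2 := sq_nonneg _
            have h5 : (β * σ i - β * σ i) = 0 := by ring
            rw [h5]
            positivity
          linarith
        calc 2 * ∑ i, ω i * ⟪L i x, v i⟫
            = ∑ i, ω i * (2 * ⟪L i x, v i⟫) := by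
              rw [Finset.mul_sum]; exact Finset.sum_congr rfl fun i _ => by ring
          _ ≤ ∑ i, ω i * (σ i * ‖L i‖ ^ 2 * β⁻¹ * ‖x‖ ^ 2 + β * (σ i)⁻¹ * ‖v i‖ ^ 2) :=
              Finset.sum_le_sum hterm
          _ = (∑ i, σ i * ω i * ‖L i‖ ^ 2) * (β⁻¹ * ‖x‖ ^ 2)
                + β * ∑ i, ω i * (σ i)⁻¹ * ‖v i‖ ^ 2 := by
              rw [Finset.sum_mul, Finset.mul_sum, ← Finset.sum_add_distrib]
              exact Finset.sum_congr rfl fun i _ => by ring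
          _ = β * (τ⁻¹ * ‖x‖ ^ 2) + β * ∑ i, ω i * (σ i)⁻¹ * ‖v i‖ ^ 2 := by
              have hbb : β * β = τ * ∑ i, σ i * ω i * ‖L i‖ ^ 2 := by
                rw [← sq, hβsq, hS]
              have hsum : ∑ i, σ i * ω i * ‖L i‖ ^ 2 = β * β / τ :=
                (eq_div_iff hτ.ne').mpr (by linarith)
              rw [hsum]
              have hsc : β * β / τ * β⁻¹ = β * τ⁻¹ := by
                field_simp [hb.ne']
              rw [show β * β / τ * (β⁻¹ * ‖x‖ ^ 2) = (β * β / τ * β⁻¹) * ‖x‖ ^ 2 by ring, hsc]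
              ring
          _ = β * B := by rw [hB]; ring
    -- combine
    have hμbound : μ * A ≤ B := by
      rw [hA, hB, mul_add]
      apply add_le_add
      · exact mul_le_mul_of_nonneg_right hμτ (by positivity)
      · rw [Finset.mul_sum]
        apply Finset.sum_le_sum
        intro i _
        calc μ * (ω i * ‖v i‖ ^ 2) ≤ (σ i)⁻¹ * (ω i * ‖v i‖ ^ 2) :=
              mul_le_mul_of_nonneg_right (hμσ i) (by have := (hω i).1; positivity)
          _ = ω i * (σ i)⁻¹ * ‖v i‖ ^ 2 := by ring
    have h1 : (1 - β) * (μ * A) ≤ (1 - β) * B :=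
      mul_le_mul_of_nonneg_left hμbound (by linarith)
    calc μ * (1 - β) * A = (1 - β) * (μ * A) := by ring
      _ ≤ (1 - β) * B := h1
      _ = B - β * B := by ring
      _ ≤ B - 2 * ∑ i, ω i * ⟪L i x, v i⟫ := sub_le_sub_left hcross B
end

section
/- Let Q : K → K be β-cocoercive on a real Hilbert space K (β > 0) and let V be a bounded linear self-adjoint ρ-strongly positive operator. Then B = V⁻¹∘Q is (βρ)-cocoercive with respect to the inner product ⟨x,y⟩_V = ⟨x, Vy⟩, i.e., ⟨x−y, Bx−By⟩_V ≥ βρ ‖Bx−By‖_V² for all x,y ∈ K. -/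
open scoped RealInnerProductSpace

/-- If Q is β-cocoercive and V is bounded linear self-adjoint ρ-strongly positive, then
B = V⁻¹∘Q is (βρ)-cocoercive in the V-inner product ⟨x,y⟩_V = ⟨x,Vy⟩: whenever
V bx = Qx and V by = Qy, we have ⟨x−y, bx−by⟩_V ≥ βρ‖bx−by‖_V². -/
theorem Vinv_comp_cocoercive {K : Type*} [NormedAddCommGroup K] [InnerProductSpace ℝ K]
    [CompleteSpace K]
    (β : ℝ) (hβ : 0 < β) (Q : K → K)
    (hQ : ∀ x y : K, β * ‖Q x - Q y‖ ^ 2 ≤ ⟪x - y, Q x - Q y⟫)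
    (V : K →L[ℝ] K) (hsa : ∀ u w : K, ⟪u, V w⟫ = ⟪V u, w⟫)
    (ρ : ℝ) (hρ : 0 < ρ) (hpos : ∀ u : K, ρ * ‖u‖ ^ 2 ≤ ⟪u, V u⟫) :
    ∀ x y bx by' : K, V bx = Q x → V by' = Q y →
      β * ρ * ⟪bx - by', V (bx - by')⟫ ≤ ⟪x - y, V (bx - by')⟫ := by
  intro x y bx by' hbx hby
  set u := bx - by' with hu
  have hVu : V u = Q x - Q y := by rw [hu, map_sub, hbx, hby]
  -- ρ‖u‖ ≤ ‖Vu‖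
  have h1 : ρ * ‖u‖ ^ 2 ≤ ‖V u‖ * ‖u‖ := by
    calc ρ * ‖u‖ ^ 2 ≤ ⟪u, V u⟫ := hpos u
      _ ≤ ‖u‖ * ‖V u‖ := real_inner_le_norm _ _
      _ = ‖V u‖ * ‖u‖ := mul_comm _ _
  have h2 : ρ * ‖u‖ ≤ ‖V u‖ := by
    rcases eq_or_ne u 0 with h | h
    · simp [h]
    · have hn : 0 < ‖u‖ := norm_pos_iff.mpr h
      have := (mul_le_mul_iff_of_pos_right hn).mp (by nlinarith : (ρ * ‖u‖) * ‖u‖ ≤ ‖V u‖ * ‖u‖)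
      exact this
  have h3 : ρ * ⟪u, V u⟫ ≤ ‖V u‖ ^ 2 := by
    calc ρ * ⟪u, V u⟫ ≤ ρ * (‖u‖ * ‖V u‖) :=
          mul_le_mul_of_nonneg_left (real_inner_le_norm _ _) hρ.le
      _ = (ρ * ‖u‖) * ‖V u‖ := by ring
      _ ≤ ‖V u‖ * ‖V u‖ := mul_le_mul_of_nonneg_right h2 (norm_nonneg _)
      _ = ‖V u‖ ^ 2 := (sq ‖V u‖).symm
  have h4 : β * ‖V u‖ ^ 2 ≤ ⟪x - y, V u⟫ := by rw [hVu]; exact hQ x y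
  calc β * ρ * ⟪u, V u⟫ = β * (ρ * ⟪u, V u⟫) := by ring
    _ ≤ β * ‖V u‖ ^ 2 := mul_le_mul_of_nonneg_left h3 hβ.le
    _ ≤ ⟪x - y, V u⟫ := h4
end

section
/- Let H be a real Hilbert space, A : H → 2^H maximally monotone, and B : H → H β-cocoercive with β > 1/2. Given x₀ ∈ H, λₙ ∈ [ε, 1] with ε ∈ (0,1), and the exact iteration xₙ₊₁ = xₙ + λₙ(J_A(xₙ − Bxₙ) − xₙ), if zer(A+B) ≠ ∅ then ∑ₙ ‖Bxₙ − Bx̄‖² < ∞ for every x̄ ∈ zer(A+B); in particular Bxₙ → Bx̄. -/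
open scoped RealInnerProductSpace

/-- A set-valued operator is maximally monotone if it is monotone and its graph is not
properly contained in the graph of another monotone operator. -/
def MaximallyMonotone {H : Type*} [NormedAddCommGroup H] [InnerProductSpace ℝ H]
    (A : H → Set H) : Prop :=
  (∀ x y u v : H, u ∈ A x → v ∈ A y → 0 ≤ ⟪x - y, u - v⟫) ∧
    ∀ x u : H, (∀ y v : H, v ∈ A y → 0 ≤ ⟪x - y, u - v⟫) → u ∈ A x

/-- Summability of (‖Bxₙ − Bx̄‖²) along the relaxed forward-backward iteration
xₙ₊₁ = xₙ + λₙ(J_A(xₙ − Bxₙ) − xₙ), where A is maximally monotone with resolvent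
J_A = (Id + A)⁻¹, B is β-cocoercive with β > 1/2, λₙ ∈ [ε,1], and x̄ ∈ zer(A+B);
in particular Bxₙ → Bx̄. -/
theorem forward_backward_summable {H : Type*} [NormedAddCommGroup H]
    [InnerProductSpace ℝ H] [CompleteSpace H]
    (A : H → Set H) (hA : MaximallyMonotone A)
    (J : H → H) (hJ : ∀ z p : H, J z = p ↔ z - p ∈ A p)
    (β : ℝ) (hβ : 1 / 2 < β) (B : H → H)
    (hB : ∀ x y : H, β * ‖B x - B y‖ ^ 2 ≤ ⟪x - y, B x - B y⟫)
    (ε : ℝ) (hε : 0 < ε) (hε1 : ε < 1)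
    (lam : ℕ → ℝ) (hlam : ∀ n, ε ≤ lam n ∧ lam n ≤ 1)
    (x : ℕ → H) (hiter : ∀ n, x (n + 1) = x n + lam n • (J (x n - B (x n)) - x n)) :
    ∀ xbar : H, -B xbar ∈ A xbar →
      Summable (fun n => ‖B (x n) - B xbar‖ ^ 2) ∧
        Filter.Tendsto (fun n => B (x n)) Filter.atTop (nhds (B xbar)) := by
  intro xbar hxbar
  set c : ℝ := ε * (2 * β - 1) with hc
  have hcpos : 0 < c := mul_pos hε (by linarith)
  -- key one-step inequality
  have key : ∀ n, c * ‖B (x n) - B xbar‖ ^ 2 ≤ ‖x n - xbar‖ ^ 2 - ‖x (n + 1) - xbar‖ ^ 2 := by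
    intro n
    set xn := x n with hxn
    set u : H := B xn - B xbar with hu
    set y : H := J (xn - B xn) with hy
    set d : H := y - xn with hd
    set v : H := xn - xbar with hv
    set l : ℝ := lam n with hl
    obtain ⟨hl1, hl2⟩ := hlam n
    have hl0 : 0 ≤ l := le_of_lt (lt_of_lt_of_le hε hl1)
    -- resolvent characterization
    have hyA : (xn - B xn) - y ∈ A y := (hJ (xn - B xn) y).1 rfl
    -- monotonicity
    have hmono : 0 ≤ ⟪y - xbar, ((xn - B xn) - y) - (-B xbar)⟫ :=
      hA.1 y xbar _ _ hyA hxbar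
    have e1 : y - xbar = d + v := by show y - xbar = (y - xn) + (xn - xbar); abel
    have e2 : ((xn - B xn) - y) - (-B xbar) = -d - u := by
      show _ = -(y - xn) - (B xn - B xbar); abel
    have hmono' : 0 ≤ -(⟪d, d⟫ + ⟪d, u⟫ + (⟪v, d⟫ + ⟪v, u⟫)) := by
      calc (0:ℝ) ≤ ⟪y - xbar, ((xn - B xn) - y) - (-B xbar)⟫ := hmono
        _ = ⟪d + v, -d - u⟫ := by rw [e1, e2]
        _ = -(⟪d, d⟫ + ⟪d, u⟫ + (⟪v, d⟫ + ⟪v, u⟫)) := by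
            rw [inner_add_left]
            simp [inner_sub_right, inner_neg_right]
            ring
    -- cocoercivity
    have hcoco : β * ‖u‖ ^ 2 ≤ ⟪v, u⟫ := hB xn xbar
    -- Cauchy-Schwarz style bound: 0 ≤ ‖d + u‖²
    have hcs : 0 ≤ ‖d‖ ^ 2 + 2 * ⟪d, u⟫ + ‖u‖ ^ 2 := by
      have := sq_nonneg ‖d + u‖
      rw [norm_add_sq_real d u] at this
      linarith
    have hdd : ⟪d, d⟫ = ‖d‖ ^ 2 := real_inner_self_eq_norm_sq d
    -- expand the next iterate
    have hnext : ‖x (n + 1) - xbar‖ ^ 2 = ‖v‖ ^ 2 + 2 * (l * ⟪v, d⟫) + l ^ 2 * ‖d‖ ^ 2 := by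
      have hx1 : x (n + 1) - xbar = v + l • d := by
        rw [hiter n]; simp [hv, hd, hy, hl, hxn]; abel
      rw [hx1, norm_add_sq_real, real_inner_smul_right, norm_smul]
      simp [mul_pow, abs_of_nonneg hl0]
    rw [hnext]
    have hdn : 0 ≤ ‖d‖ ^ 2 := sq_nonneg _
    have hun : 0 ≤ ‖u‖ ^ 2 := sq_nonneg _
    -- ⟪v,d⟫ ≤ -‖d‖² - ⟪d,u⟫ - β‖u‖²
    have hvd : ⟪v, d⟫ ≤ -‖d‖ ^ 2 - ⟪d, u⟫ - β * ‖u‖ ^ 2 := by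
      have := hmono'; rw [hdd] at this; linarith
    have h2 : 2 * (l * ⟪v, d⟫) ≤ l * (-‖d‖ ^ 2 + (1 - 2 * β) * ‖u‖ ^ 2) := by
      have := mul_le_mul_of_nonneg_left hvd hl0
      nlinarith [mul_le_mul_of_nonneg_left hcs hl0]
    nlinarith [mul_nonneg (mul_nonneg hl0 (sub_nonneg.2 hl2)) hdn,
      mul_nonneg (sub_nonneg.2 hl1) hun, sq_nonneg l]
  have hsum : Summable fun n => ‖B (x n) - B xbar‖ ^ 2 := by
    apply summable_of_sum_range_le (fun n => sq_nonneg _)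
    intro N
    have htel : ∑ k ∈ Finset.range N, c * ‖B (x k) - B xbar‖ ^ 2 ≤ ‖x 0 - xbar‖ ^ 2 := by
      calc ∑ k ∈ Finset.range N, c * ‖B (x k) - B xbar‖ ^ 2
          ≤ ∑ k ∈ Finset.range N, (‖x k - xbar‖ ^ 2 - ‖x (k + 1) - xbar‖ ^ 2) :=
            Finset.sum_le_sum fun k _ => key k
        _ = ‖x 0 - xbar‖ ^ 2 - ‖x N - xbar‖ ^ 2 := by
            rw [Finset.sum_range_sub' (fun k => ‖x k - xbar‖ ^ 2)]
        _ ≤ ‖x 0 - xbar‖ ^ 2 := by nlinarith [sq_nonneg ‖x N - xbar‖]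
    rw [← Finset.mul_sum] at htel
    calc ∑ k ∈ Finset.range N, ‖B (x k) - B xbar‖ ^ 2
        = c * (∑ k ∈ Finset.range N, ‖B (x k) - B xbar‖ ^ 2) / c := by
          field_simp
      _ ≤ ‖x 0 - xbar‖ ^ 2 / c := by
          gcongr
  refine ⟨hsum, ?_⟩
  have h0 : Filter.Tendsto (fun n => ‖B (x n) - B xbar‖ ^ 2) Filter.atTop (nhds 0) :=
    hsum.tendsto_atTop_zero
  have h1 : Filter.Tendsto (fun n => ‖B (x n) - B xbar‖) Filter.atTop (nhds 0) := by
    have := h0.sqrt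
    simpa [Real.sqrt_sq (norm_nonneg _)] using this
  rw [tendsto_iff_norm_sub_tendsto_zero]
  exact h1
end
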